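/- Let G : [0,∞) → [0,∞) be a nonnegative convex function of class C¹ with G(0) = 0 and G'(0) ≥ 0 whose derivative G' is concave on [0,∞). Then for all integers i ≥ 1 and j ≥ 1, (i+j)(G(i+j) − G(i) − G(j)) ≤ 2 (i G(j) + j G(i)). -/

import Mathlib

open Set intervalIntegral

private lemma aux_ftc (G g : ℝ → ℝ)
    (hderiv : ∀ x ∈ Set.Ici (0 : ℝ), HasDerivWithinAt G (g x) (Set.Ici 0) x)
    (hgcont : ContinuousOn g (Set.Ici 0))
    {a b : ℝ} (ha : 0 ≤ a) (hab : a ≤ b) :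
    ∫ t in a..b, g t = G b - G a := by
  have hsub : Set.Icc a b ⊆ Set.Ici 0 := fun x hx => ha.trans hx.1
  apply intervalIntegral.integral_eq_sub_of_hasDeriv_right_of_le hab
  · exact fun x hx => ((hderiv x (hsub hx)).continuousWithinAt).mono hsub
  · intro x hx
    exact (hderiv x (le_of_lt (lt_of_le_of_lt ha hx.1))).mono
      (fun y hy => le_of_lt (lt_of_le_of_lt (ha.trans hx.1.le) hy))
  · rw [← Set.uIcc_of_le hab] at hsub
    exact (hgcont.mono hsub).intervalIntegrable

private lemma aux_subadd (g : ℝ → ℝ) (hg0 : 0 ≤ g 0)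
    (hconc : ConcaveOn ℝ (Set.Ici 0) g)
    {a s : ℝ} (ha : 0 ≤ a) (hs : 0 ≤ s) : g (a + s) ≤ g a + g s := by
  rcases eq_or_lt_of_le (add_nonneg ha hs) with h | h
  · have ha0 : a = 0 := by linarith
    have hs0 : s = 0 := by linarith
    simp [ha0, hs0]; linarith
  · have hT : (0:ℝ) < a + s := h
    have hw1 : s / (a + s) + a / (a + s) = 1 := by
      rw [← add_div, add_comm, div_self hT.ne']
    have hw2 : a / (a + s) + s / (a + s) = 1 := by
      rw [← add_div, div_self hT.ne']
    have h1 := hconc.2 (Set.mem_Ici.2 le_rfl) (Set.mem_Ici.2 hT.le)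
      (div_nonneg hs hT.le) (div_nonneg ha hT.le) hw1
    have h2 := hconc.2 (Set.mem_Ici.2 le_rfl) (Set.mem_Ici.2 hT.le)
      (div_nonneg ha hT.le) (div_nonneg hs hT.le) hw2
    simp only [smul_eq_mul, mul_zero, zero_add] at h1 h2
    have e1 : a / (a + s) * (a + s) = a := by field_simp
    have e2 : s / (a + s) * (a + s) = s := by field_simp
    rw [e1] at h1
    rw [e2] at h2
    have e3 : s / (a + s) * g 0 + a / (a + s) * g 0 = g 0 := by
      rw [← add_mul, hw1, one_mul]
    have e4 : a / (a + s) * g (a + s) + s / (a + s) * g (a + s) = g (a + s) := by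
      rw [← add_mul, hw2, one_mul]
    linarith [h1, h2, e3, e4, hg0]

private lemma aux_xgx (G g : ℝ → ℝ) (hG0 : G 0 = 0)
    (hderiv : ∀ x ∈ Set.Ici (0 : ℝ), HasDerivWithinAt G (g x) (Set.Ici 0) x)
    (hgcont : ContinuousOn g (Set.Ici 0))
    (hg0 : 0 ≤ g 0) (hconc : ConcaveOn ℝ (Set.Ici 0) g)
    {x : ℝ} (hx : 0 < x) : x * g x ≤ 2 * G x := by
  have key : ∀ t ∈ Set.Icc (0:ℝ) x, t / x * g x ≤ g t := by
    intro t ht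
    have hwt : (x - t) / x + t / x = 1 := by
      rw [← add_div, sub_add_cancel, div_self hx.ne']
    have h1 := hconc.2 (Set.mem_Ici.2 le_rfl) (Set.mem_Ici.2 hx.le)
      (div_nonneg (by linarith [ht.2]) hx.le) (div_nonneg ht.1 hx.le) hwt
    simp only [smul_eq_mul, mul_zero, zero_add] at h1
    have e1 : t / x * x = t := by field_simp
    rw [e1] at h1
    nlinarith [mul_nonneg (div_nonneg (by linarith [ht.2] : (0:ℝ) ≤ x - t) hx.le) hg0]
  have hint1 : IntervalIntegrable (fun t => t / x * g x) MeasureTheory.volume 0 x := by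
    apply Continuous.intervalIntegrable
    continuity
  have hint2 : IntervalIntegrable g MeasureTheory.volume 0 x := by
    apply (hgcont.mono _).intervalIntegrable
    rw [Set.uIcc_of_le hx.le]
    exact fun y hy => hy.1
  have hmono := intervalIntegral.integral_mono_on hx.le hint1 hint2 key
  have hval : ∫ t in (0:ℝ)..x, t / x * g x = x * g x / 2 := by
    have : (fun t : ℝ => t / x * g x) = fun t : ℝ => t * (g x / x) := by
      funext t; ring
    rw [this, intervalIntegral.integral_mul_const, integral_id]
    field_simp
    ring
  have hftc := aux_ftc G g hderiv hgcont (le_refl (0:ℝ)) hx.le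
  rw [hval, hftc, hG0] at hmono
  linarith

private lemma aux_main (G g : ℝ → ℝ) (hG0 : G 0 = 0)
    (hderiv : ∀ x ∈ Set.Ici (0 : ℝ), HasDerivWithinAt G (g x) (Set.Ici 0) x)
    (hgcont : ContinuousOn g (Set.Ici 0))
    (hg0 : 0 ≤ g 0) (hconc : ConcaveOn ℝ (Set.Ici 0) g)
    {a b : ℝ} (ha : 0 ≤ a) (hb : 0 ≤ b) :
    G (a + b) - G a - G b ≤ b * g a := by
  have h1 : G (a + b) - G a = ∫ s in (0:ℝ)..b, g (a + s) := by
    rw [intervalIntegral.integral_comp_add_left g a, add_zero]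
    exact (aux_ftc G g hderiv hgcont ha (by linarith : a ≤ a + b)).symm
  have hcont1 : ContinuousOn (fun s => g (a + s)) (Set.uIcc 0 b) := by
    apply hgcont.comp (Continuous.continuousOn (by continuity))
    intro y hy
    rw [Set.uIcc_of_le hb] at hy
    exact add_nonneg ha hy.1
  have hint1 : IntervalIntegrable (fun s => g (a + s)) MeasureTheory.volume 0 b :=
    hcont1.intervalIntegrable
  have hint2 : IntervalIntegrable (fun s => g a + g s) MeasureTheory.volume 0 b := by
    apply IntervalIntegrable.add intervalIntegrable_const
    apply (hgcont.mono _).intervalIntegrable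
    rw [Set.uIcc_of_le hb]
    exact fun y hy => hy.1
  have hle : ∀ s ∈ Set.Icc (0:ℝ) b, g (a + s) ≤ g a + g s := fun s hs =>
    aux_subadd g hg0 hconc ha hs.1
  have hmono := intervalIntegral.integral_mono_on hb hint1 hint2 hle
  have hval : ∫ s in (0:ℝ)..b, (g a + g s) = b * g a + G b := by
    rw [intervalIntegral.integral_add intervalIntegrable_const
      (by apply (hgcont.mono _).intervalIntegrable
          rw [Set.uIcc_of_le hb]; exact fun y hy => hy.1)]
    rw [aux_ftc G g hderiv hgcont (le_refl (0:ℝ)) hb, hG0]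
    simp [mul_comm]
  rw [hval] at hmono
  rw [h1]
  linarith

/-- Lemma 3.5 ([BLL 2019, Proposition 7.1.9]): for `G` nonnegative, convex, `C¹` with
`G(0) = 0`, `G'(0) ≥ 0` and `G'` concave, one has
`(i+j)(G(i+j) - G(i) - G(j)) ≤ 2 (i G(j) + j G(i))`. -/
theorem stmt8 (G g : ℝ → ℝ)
    (hGnn : ∀ x : ℝ, 0 ≤ x → 0 ≤ G x) (hG0 : G 0 = 0)
    (hconv : ConvexOn ℝ (Set.Ici 0) G)
    (hderiv : ∀ x ∈ Set.Ici (0 : ℝ), HasDerivWithinAt G (g x) (Set.Ici 0) x)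
    (hgcont : ContinuousOn g (Set.Ici 0))
    (hg0 : 0 ≤ g 0)
    (hconc : ConcaveOn ℝ (Set.Ici 0) g)
    (i j : ℕ) (hi : 1 ≤ i) (hj : 1 ≤ j) :
    ((i : ℝ) + (j : ℝ)) * (G ((i : ℝ) + (j : ℝ)) - G (i : ℝ) - G (j : ℝ)) ≤
      2 * ((i : ℝ) * G (j : ℝ) + (j : ℝ) * G (i : ℝ)) := by
  set a : ℝ := (i : ℝ) with haa
  set b : ℝ := (j : ℝ) with hbb
  have ha1 : (1:ℝ) ≤ a := by rw [haa]; exact_mod_cast hi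
  have hb1 : (1:ℝ) ≤ b := by rw [hbb]; exact_mod_cast hj
  have ha : (0:ℝ) ≤ a := by linarith
  have hb : (0:ℝ) ≤ b := by linarith
  have hA1 : G (a + b) - G a - G b ≤ b * g a :=
    aux_main G g hG0 hderiv hgcont hg0 hconc ha hb
  have hA2 : G (a + b) - G b - G a ≤ a * g b := by
    have := aux_main G g hG0 hderiv hgcont hg0 hconc hb ha
    rwa [add_comm] at this
  have hxa : a * g a ≤ 2 * G a :=
    aux_xgx G g hG0 hderiv hgcont hg0 hconc (by linarith)
  have hxb : b * g b ≤ 2 * G b :=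
    aux_xgx G g hG0 hderiv hgcont hg0 hconc (by linarith)
  nlinarith [mul_le_mul_of_nonneg_left hA1 ha, mul_le_mul_of_nonneg_left hA2 hb,
    mul_le_mul_of_nonneg_left hxa hb, mul_le_mul_of_nonneg_left hxb ha]
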